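/- arXiv:1311.2618 — 2 statements merged into one kernel-verified Lean document; each statement's English description precedes it below -/
import Mathlib

section
/- If two graphs are locally equivalent, then they have the same linear rank-width. -/
/-- Local complementation at a vertex `v`. -/
def localComp {V : Type} (G : SimpleGraph V) (v : V) : SimpleGraph V where
  Adj x y := x ≠ y ∧ Xor' (G.Adj x y) (G.Adj v x ∧ G.Adj v y)
  symm := by
    constructor
    rintro x y ⟨hne, h⟩
    exact ⟨hne.symm, by rwa [G.adj_comm y x, and_comm]⟩
  loopless := by constructor; rintro x ⟨hne, -⟩; exact hne rfl

/-- Two graphs are locally equivalent if one is obtained from the other by a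
sequence of local complementations. -/
def LocallyEquivalent {V : Type} (G H : SimpleGraph V) : Prop :=
  ∃ l : List V, H = l.foldl localComp G

/-- The cut-rank of `X`: the rank over GF(2) of the adjacency submatrix
`A(G)[X, V \\ X]`. -/
noncomputable def cutRank {V : Type} [Fintype V] [DecidableEq V]
    (G : SimpleGraph V) (X : Finset V) : ℕ := by
  classical
  exact Matrix.rank (Matrix.of fun (i : X) (j : (Xᶜ : Finset V)) =>
    if G.Adj (i : V) (j : V) then (1 : ZMod 2) else 0)

/-- A linear layout is an ordering of all vertices. -/
def IsLinearLayout {V : Type} (l : List V) : Prop := l.Nodup ∧ ∀ v : V, v ∈ l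

/-- The width of a linear layout: the maximum cut-rank of an initial segment. -/
noncomputable def layoutWidth {V : Type} [Fintype V] [DecidableEq V]
    (G : SimpleGraph V) (l : List V) : ℕ :=
  (Finset.range l.length).sup fun i => cutRank G (l.take (i+1)).toFinset

/-- The linear rank-width of a graph. -/
noncomputable def linRankWidth {V : Type} [Fintype V] [DecidableEq V]
    (G : SimpleGraph V) : ℕ :=
  sInf {k | ∃ l : List V, IsLinearLayout l ∧ layoutWidth G l = k}


lemma rank_rowOp {m n : Type} [Fintype m] [Fintype n] [DecidableEq m]
    (M : Matrix m n (ZMod 2)) (u : m → ZMod 2) (k0 : m) (hu : u k0 = 0) :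
    (Matrix.of fun i j => M i j + u i * M k0 j).rank = M.rank := by
  set E : Matrix m m (ZMod 2) :=
    Matrix.of fun i k => (if i = k then 1 else 0) + u i * (if k = k0 then 1 else 0) with hE
  have hEM : Matrix.of (fun i j => M i j + u i * M k0 j) = E * M := by
    ext i j
    simp only [Matrix.mul_apply, hE, Matrix.of_apply, add_mul, ite_mul, one_mul, zero_mul,
      mul_assoc]
    rw [Finset.sum_add_distrib, Finset.sum_ite_eq (Finset.univ) i (fun k => M k j)]
    simp [mul_ite, Finset.sum_ite_eq' (Finset.univ) k0 (fun k => u i * M k j)]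
  have hEE : E * E = 1 := by
    ext i k
    simp only [Matrix.mul_apply, hE, Matrix.of_apply]
    have : ∀ x, ((if i = x then 1 else 0) + u i * (if x = k0 then 1 else 0)) *
        ((if x = k then 1 else 0) + u x * (if k = k0 then 1 else 0))
        = (if i = x then (if x = k then (1:ZMod 2) else 0) else 0)
          + (if k = k0 then (if i = x then u x else 0) else 0)
          + (if x = k then (if x = k0 then u i else 0) else 0)
          + (if k = k0 then (if x = k0 then u i * u x else 0) else 0) := by
      intro x
      by_cases h1 : i = x <;> by_cases h2 : x = k0 <;> by_cases h3 : x = k <;>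
        by_cases h4 : k = k0 <;> simp [h1, h2, h3, h4, hu] <;> (first | ring1 | simp [show k0 ≠ k from fun h => h4 h.symm])
    rw [Finset.sum_congr rfl fun x _ => this x]
    rw [Finset.sum_add_distrib, Finset.sum_add_distrib, Finset.sum_add_distrib]
    by_cases hkk : k = k0
    · subst hkk
      simp only [Finset.sum_ite_eq, Finset.sum_ite_eq', hu, Matrix.one_apply,
        Finset.mem_univ, if_true, mul_zero, add_zero, if_pos rfl]
      rw [add_assoc, CharTwo.add_self_eq_zero, add_zero]
    · simp [hkk, Finset.sum_ite_eq, Finset.sum_ite_eq', Matrix.one_apply]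
  rw [hEM]
  have hdet : E.det * E.det = 1 := by rw [← Matrix.det_mul, hEE, Matrix.det_one]
  exact Matrix.rank_mul_eq_right_of_isUnit_det E M (isUnit_iff_exists_inv.mpr ⟨_, hdet⟩)

lemma rank_colOp {m n : Type} [Fintype m] [Fintype n] [DecidableEq n]
    (M : Matrix m n (ZMod 2)) (w : n → ZMod 2) (c0 : n) (hw : w c0 = 0) :
    (Matrix.of fun i j => M i j + M i c0 * w j).rank = M.rank := by
  have := rank_rowOp M.transpose w c0 hw
  rw [← Matrix.rank_transpose M, ← this, ← Matrix.rank_transpose]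
  congr 1
  ext i j
  simp [Matrix.transpose_apply, mul_comm]


lemma cutRank_localComp {V : Type} [Fintype V] [DecidableEq V]
    (G : SimpleGraph V) (v : V) (X : Finset V) :
    cutRank (localComp G v) X = cutRank G X := by
  classical
  unfold cutRank
  set a : V → ZMod 2 := fun x => if G.Adj v x then 1 else 0 with ha
  set M : Matrix X (Xᶜ : Finset V) (ZMod 2) :=
    Matrix.of fun i j => if G.Adj (i : V) (j : V) then 1 else 0 with hM
  have hav : a v = 0 := by simp [ha]
  have key : (Matrix.of fun (i : X) (j : (Xᶜ : Finset V)) =>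
      if (localComp G v).Adj (i : V) (j : V) then (1 : ZMod 2) else 0)
      = Matrix.of fun i j => M i j + a (i : V) * a (j : V) := by
    ext i j
    have hne : (i : V) ≠ (j : V) := by
      intro h
      exact (Finset.mem_compl.mp j.2) (h ▸ i.2)
    by_cases hij : G.Adj (i : V) (j : V) <;> by_cases hvi : G.Adj v (i : V) <;>
      by_cases hvj : G.Adj v (j : V) <;>
      (simp [localComp, Xor', hij, hvi, hvj, hne, ha, hM]; try decide)
  rw [key]
  by_cases hv : v ∈ X
  · have h2 : (Matrix.of fun (i : X) (j : (Xᶜ : Finset V)) => M i j + a (i : V) * a (j : V))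
        = Matrix.of fun i j => M i j + (fun i : X => a (i : V)) i * M ⟨v, hv⟩ j := rfl
    rw [h2, rank_rowOp M _ ⟨v, hv⟩ hav]
  · have hvc : v ∈ Xᶜ := Finset.mem_compl.mpr hv
    have h2 : (Matrix.of fun (i : X) (j : (Xᶜ : Finset V)) => M i j + a (i : V) * a (j : V))
        = Matrix.of fun i j => M i j + M i ⟨v, hvc⟩ * (fun j : (Xᶜ : Finset V) => a (j : V)) j := by
      ext i j
      simp only [Matrix.of_apply, hM, ha]
      rw [G.adj_comm (i : V) v]
    rw [h2, rank_colOp M _ ⟨v, hvc⟩ hav]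

lemma cutRank_foldl {V : Type} [Fintype V] [DecidableEq V]
    (l : List V) (G : SimpleGraph V) (X : Finset V) :
    cutRank (l.foldl localComp G) X = cutRank G X := by
  induction l generalizing G with
  | nil => rfl
  | cons v l ih => rw [List.foldl_cons, ih, cutRank_localComp]

theorem linRankWidth_eq_of_locallyEquivalent {V : Type} [Fintype V] [DecidableEq V]
    (G H : SimpleGraph V) (h : LocallyEquivalent G H) :
    linRankWidth G = linRankWidth H := by
  obtain ⟨l, rfl⟩ := h
  have hlw : ∀ lo : List V, layoutWidth (l.foldl localComp G) lo = layoutWidth G lo := by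
    intro lo
    unfold layoutWidth
    exact Finset.sup_congr rfl fun i _ => cutRank_foldl l G _
  unfold linRankWidth
  congr 1
  ext k
  simp only [Set.mem_setOf_eq, hlw]
end

section
/- Every graph G ∈ Δ_k with k ≥ 1 has a unique triangle v_1v_2v_3 such that deleting the three triangle edges leaves exactly three components, each belonging to Δ_{k-1}. -/
/-- The delta composition of three graphs: disjoint union plus a triangle
`v₁v₂v₃` with one vertex in each part. -/
def deltaComp {V₁ V₂ V₃ : Type} (G₁ : SimpleGraph V₁) (G₂ : SimpleGraph V₂)
    (G₃ : SimpleGraph V₃) (v₁ : V₁) (v₂ : V₂) (v₃ : V₃) :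
    SimpleGraph (V₁ ⊕ V₂ ⊕ V₃) where
  Adj x y := match x, y with
    | .inl a, .inl b => G₁.Adj a b
    | .inr (.inl a), .inr (.inl b) => G₂.Adj a b
    | .inr (.inr a), .inr (.inr b) => G₃.Adj a b
    | .inl a, .inr (.inl b) => a = v₁ ∧ b = v₂
    | .inr (.inl a), .inl b => a = v₂ ∧ b = v₁
    | .inl a, .inr (.inr b) => a = v₁ ∧ b = v₃
    | .inr (.inr a), .inl b => a = v₃ ∧ b = v₁
    | .inr (.inl a), .inr (.inr b) => a = v₂ ∧ b = v₃
    | .inr (.inr a), .inr (.inl b) => a = v₃ ∧ b = v₂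
  symm := by
    constructor
    rintro (a|a|a) (b|b|b) h
    · exact G₁.adj_symm h
    · exact ⟨h.2, h.1⟩
    · exact ⟨h.2, h.1⟩
    · exact ⟨h.2, h.1⟩
    · exact G₂.adj_symm h
    · exact ⟨h.2, h.1⟩
    · exact ⟨h.2, h.1⟩
    · exact ⟨h.2, h.1⟩
    · exact G₃.adj_symm h
  loopless := by constructor; rintro (a|a|a) h <;> exact (SimpleGraph.irrefl _) h

/-- `InDelta k G` means `G` belongs to the class `Δ_k` (up to isomorphism):
`Δ_0 = {K₂}` and `Δ_k` is the set of delta compositions of three graphs in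
`Δ_{k-1}`. -/
inductive InDelta : ℕ → {V : Type} → SimpleGraph V → Prop
  | base {V : Type} (G : SimpleGraph V)
      (e : Nonempty (G ≃g (⊤ : SimpleGraph (Fin 2)))) : InDelta 0 G
  | comp {k : ℕ} {V₁ V₂ V₃ V : Type} {G₁ : SimpleGraph V₁} {G₂ : SimpleGraph V₂}
      {G₃ : SimpleGraph V₃} (G : SimpleGraph V) (v₁ : V₁) (v₂ : V₂) (v₃ : V₃)
      (h₁ : InDelta k G₁) (h₂ : InDelta k G₂) (h₃ : InDelta k G₃)
      (e : Nonempty (G ≃g deltaComp G₁ G₂ G₃ v₁ v₂ v₃)) : InDelta (k+1) G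


/-- `v₁v₂v₃` is a main triangle of `G` for level `k`: a triangle whose edge
deletion leaves exactly three connected components, each in `Δ_{k-1}`. -/
def IsMainTriangle (k : ℕ) {V : Type} (G : SimpleGraph V) (v₁ v₂ v₃ : V) : Prop :=
  G.Adj v₁ v₂ ∧ G.Adj v₂ v₃ ∧ G.Adj v₁ v₃ ∧
  (let G' := G.deleteEdges {s(v₁, v₂), s(v₂, v₃), s(v₁, v₃)}
   Nat.card G'.ConnectedComponent = 3 ∧
   ∀ C : G'.ConnectedComponent,
     InDelta (k - 1) (G'.induce {v : V | G'.connectedComponentMk v = C}))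

open SimpleGraph

section DeltaAux

variable {V₁ V₂ V₃ : Type} {G₁ : SimpleGraph V₁} {G₂ : SimpleGraph V₂} {G₃ : SimpleGraph V₃}
  {v₁ : V₁} {v₂ : V₂} {v₃ : V₃}

lemma InDelta.of_iso {k : ℕ} {V W : Type} {G : SimpleGraph V} {H : SimpleGraph W}
    (h : InDelta k H) (e : G ≃g H) : InDelta k G := by
  cases h with
  | base H e' => exact .base _ (e'.map e.trans)
  | comp H w₁ w₂ w₃ h₁ h₂ h₃ e' => exact .comp _ w₁ w₂ w₃ h₁ h₂ h₃ (e'.map e.trans)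

lemma InDelta.card {k : ℕ} {V : Type} {G : SimpleGraph V} (h : InDelta k G) :
    Nat.card V = 2 * 3 ^ k := by
  induction h with
  | base G e =>
    obtain ⟨f⟩ := e
    rw [Nat.card_congr f.toEquiv]
    simp
  | comp G w₁ w₂ w₃ h₁ h₂ h₃ e ih₁ ih₂ ih₃ =>
    obtain ⟨f⟩ := e
    haveI : Finite _ := Nat.finite_of_card_ne_zero (by rw [ih₁]; positivity)
    haveI : Finite _ := Nat.finite_of_card_ne_zero (by rw [ih₂]; positivity)
    haveI : Finite _ := Nat.finite_of_card_ne_zero (by rw [ih₃]; positivity)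
    rw [Nat.card_congr f.toEquiv, Nat.card_sum, Nat.card_sum, ih₁, ih₂, ih₃, pow_succ]
    ring

lemma InDelta.finite {k : ℕ} {V : Type} {G : SimpleGraph V} (h : InDelta k G) : Finite V :=
  Nat.finite_of_card_ne_zero (by rw [h.card]; positivity)

/-- Graph hom from the first part into a delta composition. -/
def homL : G₁ →g deltaComp G₁ G₂ G₃ v₁ v₂ v₃ := ⟨Sum.inl, fun h => h⟩

def homM : G₂ →g deltaComp G₁ G₂ G₃ v₁ v₂ v₃ := ⟨fun x => .inr (.inl x), fun h => h⟩

def homR : G₃ →g deltaComp G₁ G₂ G₃ v₁ v₂ v₃ := ⟨fun x => .inr (.inr x), fun h => h⟩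

lemma deltaComp_connected (h₁ : G₁.Connected) (h₂ : G₂.Connected) (h₃ : G₃.Connected) :
    (deltaComp G₁ G₂ G₃ v₁ v₂ v₃).Connected := by
  rw [connected_iff_exists_forall_reachable]
  refine ⟨.inl v₁, ?_⟩
  rintro (a | b | c)
  · exact (h₁ v₁ a).map homL
  · exact (Adj.reachable
      (show (deltaComp G₁ G₂ G₃ v₁ v₂ v₃).Adj (.inl v₁) (.inr (.inl v₂)) from ⟨rfl, rfl⟩)).trans
      ((h₂ v₂ b).map homM)
  · exact (Adj.reachable
      (show (deltaComp G₁ G₂ G₃ v₁ v₂ v₃).Adj (.inl v₁) (.inr (.inr v₃)) from ⟨rfl, rfl⟩)).trans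
      ((h₃ v₃ c).map homR)

lemma InDelta.connected {k : ℕ} {V : Type} {G : SimpleGraph V} (h : InDelta k G) :
    G.Connected := by
  induction h with
  | base G e =>
    obtain ⟨f⟩ := e
    exact f.connected_iff.mpr connected_top
  | comp G w₁ w₂ w₃ h₁ h₂ h₃ e ih₁ ih₂ ih₃ =>
    obtain ⟨f⟩ := e
    exact f.connected_iff.mpr (deltaComp_connected ih₁ ih₂ ih₃)

end DeltaAux
section DeltaAux2

variable {V₁ V₂ V₃ : Type} {G₁ : SimpleGraph V₁} {G₂ : SimpleGraph V₂} {G₃ : SimpleGraph V₃}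
  {v₁ : V₁} {v₂ : V₂} {v₃ : V₃}

-- cross-adjacency characterizations (all definitional)
lemma dAdj_ll {a b : V₁} :
    (deltaComp G₁ G₂ G₃ v₁ v₂ v₃).Adj (.inl a) (.inl b) ↔ G₁.Adj a b := Iff.rfl
lemma dAdj_mm {a b : V₂} :
    (deltaComp G₁ G₂ G₃ v₁ v₂ v₃).Adj (.inr (.inl a)) (.inr (.inl b)) ↔ G₂.Adj a b := Iff.rfl
lemma dAdj_rr {a b : V₃} :
    (deltaComp G₁ G₂ G₃ v₁ v₂ v₃).Adj (.inr (.inr a)) (.inr (.inr b)) ↔ G₃.Adj a b := Iff.rfl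
lemma dAdj_lm {a : V₁} {b : V₂} :
    (deltaComp G₁ G₂ G₃ v₁ v₂ v₃).Adj (.inl a) (.inr (.inl b)) ↔ a = v₁ ∧ b = v₂ := Iff.rfl
lemma dAdj_ml {a : V₂} {b : V₁} :
    (deltaComp G₁ G₂ G₃ v₁ v₂ v₃).Adj (.inr (.inl a)) (.inl b) ↔ a = v₂ ∧ b = v₁ := Iff.rfl
lemma dAdj_lr {a : V₁} {b : V₃} :
    (deltaComp G₁ G₂ G₃ v₁ v₂ v₃).Adj (.inl a) (.inr (.inr b)) ↔ a = v₁ ∧ b = v₃ := Iff.rfl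
lemma dAdj_rl {a : V₃} {b : V₁} :
    (deltaComp G₁ G₂ G₃ v₁ v₂ v₃).Adj (.inr (.inr a)) (.inl b) ↔ a = v₃ ∧ b = v₁ := Iff.rfl
lemma dAdj_mr {a : V₂} {b : V₃} :
    (deltaComp G₁ G₂ G₃ v₁ v₂ v₃).Adj (.inr (.inl a)) (.inr (.inr b)) ↔ a = v₂ ∧ b = v₃ := Iff.rfl
lemma dAdj_rm {a : V₃} {b : V₂} :
    (deltaComp G₁ G₂ G₃ v₁ v₂ v₃).Adj (.inr (.inr a)) (.inr (.inl b)) ↔ a = v₃ ∧ b = v₂ := Iff.rfl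

end DeltaAux2
section DeltaAux3

variable {V₁ V₂ V₃ : Type} {G₁ : SimpleGraph V₁} {G₂ : SimpleGraph V₂} {G₃ : SimpleGraph V₃}
  {v₁ : V₁} {v₂ : V₂} {v₃ : V₃}

/-- The triangle edge set of a delta composition. -/
def dT (v₁ : V₁) (v₂ : V₂) (v₃ : V₃) : Set (Sym2 (V₁ ⊕ V₂ ⊕ V₃)) :=
  {s(.inl v₁, .inr (.inl v₂)), s(.inr (.inl v₂), .inr (.inr v₃)), s(.inl v₁, .inr (.inr v₃))}

lemma dDel_adj_ll {a b : V₁} :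
    ((deltaComp G₁ G₂ G₃ v₁ v₂ v₃).deleteEdges (dT v₁ v₂ v₃)).Adj (.inl a) (.inl b)
      ↔ G₁.Adj a b := by
  rw [SimpleGraph.deleteEdges_adj, dAdj_ll]
  simp [dT, Sym2.eq_iff]

lemma dDel_adj_mm {a b : V₂} :
    ((deltaComp G₁ G₂ G₃ v₁ v₂ v₃).deleteEdges (dT v₁ v₂ v₃)).Adj (.inr (.inl a)) (.inr (.inl b))
      ↔ G₂.Adj a b := by
  rw [SimpleGraph.deleteEdges_adj, dAdj_mm]
  simp [dT, Sym2.eq_iff]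

lemma dDel_adj_rr {a b : V₃} :
    ((deltaComp G₁ G₂ G₃ v₁ v₂ v₃).deleteEdges (dT v₁ v₂ v₃)).Adj (.inr (.inr a)) (.inr (.inr b))
      ↔ G₃.Adj a b := by
  rw [SimpleGraph.deleteEdges_adj, dAdj_rr]
  simp [dT, Sym2.eq_iff]

lemma dDel_not_adj_lm {a : V₁} {b : V₂} :
    ¬ ((deltaComp G₁ G₂ G₃ v₁ v₂ v₃).deleteEdges (dT v₁ v₂ v₃)).Adj (.inl a) (.inr (.inl b)) := by
  rw [SimpleGraph.deleteEdges_adj, dAdj_lm]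
  rintro ⟨⟨rfl, rfl⟩, hn⟩
  exact hn (by simp [dT])

lemma dDel_not_adj_lr {a : V₁} {b : V₃} :
    ¬ ((deltaComp G₁ G₂ G₃ v₁ v₂ v₃).deleteEdges (dT v₁ v₂ v₃)).Adj (.inl a) (.inr (.inr b)) := by
  rw [SimpleGraph.deleteEdges_adj, dAdj_lr]
  rintro ⟨⟨rfl, rfl⟩, hn⟩
  exact hn (by simp [dT])

lemma dDel_not_adj_mr {a : V₂} {b : V₃} :
    ¬ ((deltaComp G₁ G₂ G₃ v₁ v₂ v₃).deleteEdges (dT v₁ v₂ v₃)).Adj (.inr (.inl a))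
      (.inr (.inr b)) := by
  rw [SimpleGraph.deleteEdges_adj, dAdj_mr]
  rintro ⟨⟨rfl, rfl⟩, hn⟩
  exact hn (by simp [dT])

/-- Which part of the sum a vertex lies in. -/
def sideFn {V₁ V₂ V₃ : Type} : V₁ ⊕ V₂ ⊕ V₃ → Fin 3 :=
  Sum.elim (fun _ => 0) (Sum.elim (fun _ => 1) (fun _ => 2))

lemma side_eq_of_adj {x y : V₁ ⊕ V₂ ⊕ V₃}
    (h : ((deltaComp G₁ G₂ G₃ v₁ v₂ v₃).deleteEdges (dT v₁ v₂ v₃)).Adj x y) :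
    sideFn x = sideFn y := by
  rcases x with a | a | a <;> rcases y with b | b | b
  · rfl
  · exact absurd h dDel_not_adj_lm
  · exact absurd h dDel_not_adj_lr
  · exact absurd h.symm dDel_not_adj_lm
  · rfl
  · exact absurd h dDel_not_adj_mr
  · exact absurd h.symm dDel_not_adj_lr
  · exact absurd h.symm dDel_not_adj_mr
  · rfl

lemma side_eq_of_reachable {x y : V₁ ⊕ V₂ ⊕ V₃}
    (h : ((deltaComp G₁ G₂ G₃ v₁ v₂ v₃).deleteEdges (dT v₁ v₂ v₃)).Reachable x y) :
    sideFn x = sideFn y := by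
  obtain ⟨w⟩ := h
  induction w with
  | nil => rfl
  | cons h p ih => exact (side_eq_of_adj h).trans ih

/-- Homs into the pruned delta composition. -/
def homL' : G₁ →g (deltaComp G₁ G₂ G₃ v₁ v₂ v₃).deleteEdges (dT v₁ v₂ v₃) :=
  ⟨Sum.inl, fun h => dDel_adj_ll.mpr h⟩

def homM' : G₂ →g (deltaComp G₁ G₂ G₃ v₁ v₂ v₃).deleteEdges (dT v₁ v₂ v₃) :=
  ⟨fun x => .inr (.inl x), fun h => dDel_adj_mm.mpr h⟩

def homR' : G₃ →g (deltaComp G₁ G₂ G₃ v₁ v₂ v₃).deleteEdges (dT v₁ v₂ v₃) :=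
  ⟨fun x => .inr (.inr x), fun h => dDel_adj_rr.mpr h⟩

open SimpleGraph in
lemma dDel_card_components (h₁ : G₁.Connected) (h₂ : G₂.Connected) (h₃ : G₃.Connected) :
    Nat.card ((deltaComp G₁ G₂ G₃ v₁ v₂ v₃).deleteEdges (dT v₁ v₂ v₃)).ConnectedComponent
      = 3 := by
  set K := (deltaComp G₁ G₂ G₃ v₁ v₂ v₃).deleteEdges (dT v₁ v₂ v₃) with hK
  have e : K.ConnectedComponent ≃ Fin 3 :=
    { toFun := Quot.lift sideFn (fun _ _ r => side_eq_of_reachable r)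
      invFun := fun i =>
        K.connectedComponentMk (if i = 0 then .inl v₁ else
          if i = 1 then .inr (.inl v₂) else .inr (.inr v₃))
      left_inv := by
        refine ConnectedComponent.ind fun x => ?_
        rcases x with a | a | a
        · exact ConnectedComponent.sound ((h₁ v₁ a).map homL')
        · exact ConnectedComponent.sound ((h₂ v₂ a).map homM')
        · exact ConnectedComponent.sound ((h₃ v₃ a).map homR')
      right_inv := by intro i; fin_cases i <;> rfl }
  rw [Nat.card_congr e]
  simp

open SimpleGraph in
lemma dDel_component_induce {m : ℕ} (h₁ : InDelta m G₁) (h₂ : InDelta m G₂) (h₃ : InDelta m G₃)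
    (C : ((deltaComp G₁ G₂ G₃ v₁ v₂ v₃).deleteEdges (dT v₁ v₂ v₃)).ConnectedComponent) :
    InDelta m (((deltaComp G₁ G₂ G₃ v₁ v₂ v₃).deleteEdges (dT v₁ v₂ v₃)).induce
      {v | ((deltaComp G₁ G₂ G₃ v₁ v₂ v₃).deleteEdges (dT v₁ v₂ v₃)).connectedComponentMk v
        = C}) := by
  obtain ⟨x, rfl⟩ := Quot.exists_rep C
  set K := (deltaComp G₁ G₂ G₃ v₁ v₂ v₃).deleteEdges (dT v₁ v₂ v₃) with hK
  rcases x with a | a | a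
  · refine h₁.of_iso (Iso.symm ?_)
    have hψ : ∀ b : V₁, Sum.inl b ∈ {v | K.connectedComponentMk v
        = K.connectedComponentMk (Sum.inl a)} :=
      fun b => ConnectedComponent.sound ((h₁.connected b a).map homL')
    refine { toEquiv := Equiv.ofBijective (fun b => ⟨Sum.inl b, hψ b⟩) ⟨?_, ?_⟩,
             map_rel_iff' := ?_ }
    · intro x y hxy
      simpa using congrArg Subtype.val hxy
    · rintro ⟨v, hv⟩
      have hs := side_eq_of_reachable (ConnectedComponent.exact hv)
      rcases v with b | b | b
      · exact ⟨b, rfl⟩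
      · exact absurd hs (by simp [sideFn])
      · exact absurd hs (by simp [sideFn])
    · intro x y
      simp only [Equiv.ofBijective_apply, comap_adj, Function.Embedding.coe_subtype]
      exact dDel_adj_ll
  · refine h₂.of_iso (Iso.symm ?_)
    have hψ : ∀ b : V₂, Sum.inr (Sum.inl b) ∈ {v | K.connectedComponentMk v
        = K.connectedComponentMk (Sum.inr (Sum.inl a))} :=
      fun b => ConnectedComponent.sound ((h₂.connected b a).map homM')
    refine { toEquiv := Equiv.ofBijective (fun b => ⟨Sum.inr (Sum.inl b), hψ b⟩) ⟨?_, ?_⟩,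
             map_rel_iff' := ?_ }
    · intro x y hxy
      simpa using congrArg Subtype.val hxy
    · rintro ⟨v, hv⟩
      have hs := side_eq_of_reachable (ConnectedComponent.exact hv)
      rcases v with b | b | b
      · exact absurd hs (by simp [sideFn])
      · exact ⟨b, rfl⟩
      · exact absurd hs (by simp [sideFn])
    · intro x y
      simp only [Equiv.ofBijective_apply, comap_adj, Function.Embedding.coe_subtype]
      exact dDel_adj_mm
  · refine h₃.of_iso (Iso.symm ?_)
    have hψ : ∀ b : V₃, Sum.inr (Sum.inr b) ∈ {v | K.connectedComponentMk v
        = K.connectedComponentMk (Sum.inr (Sum.inr a))} :=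
      fun b => ConnectedComponent.sound ((h₃.connected b a).map homR')
    refine { toEquiv := Equiv.ofBijective (fun b => ⟨Sum.inr (Sum.inr b), hψ b⟩) ⟨?_, ?_⟩,
             map_rel_iff' := ?_ }
    · intro x y hxy
      simpa using congrArg Subtype.val hxy
    · rintro ⟨v, hv⟩
      have hs := side_eq_of_reachable (ConnectedComponent.exact hv)
      rcases v with b | b | b
      · exact absurd hs (by simp [sideFn])
      · exact absurd hs (by simp [sideFn])
      · exact ⟨b, rfl⟩
    · intro x y
      simp only [Equiv.ofBijective_apply, comap_adj, Function.Embedding.coe_subtype]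
      exact dDel_adj_rr

end DeltaAux3
section DeltaAux4

open SimpleGraph

variable {V₁ V₂ V₃ : Type} {G₁ : SimpleGraph V₁} {G₂ : SimpleGraph V₂} {G₃ : SimpleGraph V₃}
  {v₁ : V₁} {v₂ : V₂} {v₃ : V₃}

lemma dT_eq :
    ({s(Sum.inl v₁, Sum.inr (Sum.inl v₂)), s(Sum.inr (Sum.inl v₂), Sum.inr (Sum.inr v₃)),
      s(Sum.inl v₁, Sum.inr (Sum.inr v₃))} : Set (Sym2 (V₁ ⊕ V₂ ⊕ V₃))) = dT v₁ v₂ v₃ := rfl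

lemma deltaComp_main {m : ℕ} (h₁ : InDelta m G₁) (h₂ : InDelta m G₂) (h₃ : InDelta m G₃) :
    IsMainTriangle (m + 1) (deltaComp G₁ G₂ G₃ v₁ v₂ v₃)
      (.inl v₁) (.inr (.inl v₂)) (.inr (.inr v₃)) := by
  refine ⟨⟨rfl, rfl⟩, ⟨rfl, rfl⟩, ⟨rfl, rfl⟩, ?_, ?_⟩
  · exact dDel_card_components h₁.connected h₂.connected h₃.connected
  · intro C
    exact dDel_component_induce h₁ h₂ h₃ C

lemma triangle_classify {x y z : V₁ ⊕ V₂ ⊕ V₃}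
    (hxy : (deltaComp G₁ G₂ G₃ v₁ v₂ v₃).Adj x y)
    (hyz : (deltaComp G₁ G₂ G₃ v₁ v₂ v₃).Adj y z)
    (hxz : (deltaComp G₁ G₂ G₃ v₁ v₂ v₃).Adj x z) :
    ({x, y, z} : Set (V₁ ⊕ V₂ ⊕ V₃)) = {.inl v₁, .inr (.inl v₂), .inr (.inr v₃)} ∨
    (∃ a b c : V₁, x = .inl a ∧ y = .inl b ∧ z = .inl c) ∨
    (∃ a b c : V₂, x = .inr (.inl a) ∧ y = .inr (.inl b) ∧ z = .inr (.inl c)) ∨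
    (∃ a b c : V₃, x = .inr (.inr a) ∧ y = .inr (.inr b) ∧ z = .inr (.inr c)) := by
  rcases x with a | a | a <;> rcases y with b | b | b <;> rcases z with c | c | c <;>
    simp only [dAdj_ll, dAdj_mm, dAdj_rr, dAdj_lm, dAdj_ml, dAdj_lr, dAdj_rl, dAdj_mr, dAdj_rm]
      at hxy hyz hxz
  -- (l,l,l)
  · exact Or.inr (Or.inl ⟨a, b, c, rfl, rfl, rfl⟩)
  -- (l,l,m)
  · obtain ⟨rfl, rfl⟩ := hyz; obtain ⟨rfl, -⟩ := hxz; exact absurd hxy (G₁.loopless.irrefl _)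
  -- (l,l,r)
  · obtain ⟨rfl, rfl⟩ := hyz; obtain ⟨rfl, -⟩ := hxz; exact absurd hxy (G₁.loopless.irrefl _)
  -- (l,m,l)
  · obtain ⟨rfl, rfl⟩ := hxy; obtain ⟨-, rfl⟩ := hyz; exact absurd hxz (G₁.loopless.irrefl _)
  -- (l,m,m)
  · obtain ⟨rfl, rfl⟩ := hxy; obtain ⟨-, rfl⟩ := hxz; exact absurd hyz (G₂.loopless.irrefl _)
  -- (l,m,r)
  · obtain ⟨rfl, rfl⟩ := hxy; obtain ⟨-, rfl⟩ := hyz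
    left; ext w; simp only [Set.mem_insert_iff, Set.mem_singleton_iff]; try tauto
  -- (l,r,l)
  · obtain ⟨rfl, rfl⟩ := hxy; obtain ⟨-, rfl⟩ := hyz; exact absurd hxz (G₁.loopless.irrefl _)
  -- (l,r,m)
  · obtain ⟨rfl, rfl⟩ := hxy; obtain ⟨-, rfl⟩ := hyz
    left; ext w; simp only [Set.mem_insert_iff, Set.mem_singleton_iff]; try tauto
  -- (l,r,r)
  · obtain ⟨rfl, rfl⟩ := hxy; obtain ⟨-, rfl⟩ := hxz; exact absurd hyz (G₃.loopless.irrefl _)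
  -- (m,l,l)
  · obtain ⟨rfl, rfl⟩ := hxy; obtain ⟨-, rfl⟩ := hxz; exact absurd hyz (G₁.loopless.irrefl _)
  -- (m,l,m)
  · obtain ⟨rfl, rfl⟩ := hxy; obtain ⟨-, rfl⟩ := hyz; exact absurd hxz (G₂.loopless.irrefl _)
  -- (m,l,r)
  · obtain ⟨rfl, rfl⟩ := hxy; obtain ⟨-, rfl⟩ := hyz
    left; ext w; simp only [Set.mem_insert_iff, Set.mem_singleton_iff]; try tauto
  -- (m,m,l)
  · obtain ⟨rfl, rfl⟩ := hyz; obtain ⟨rfl, -⟩ := hxz; exact absurd hxy (G₂.loopless.irrefl _)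
  -- (m,m,m)
  · exact Or.inr (Or.inr (Or.inl ⟨a, b, c, rfl, rfl, rfl⟩))
  -- (m,m,r)
  · obtain ⟨rfl, rfl⟩ := hyz; obtain ⟨rfl, -⟩ := hxz; exact absurd hxy (G₂.loopless.irrefl _)
  -- (m,r,l)
  · obtain ⟨rfl, rfl⟩ := hxy; obtain ⟨-, rfl⟩ := hyz
    left; ext w; simp only [Set.mem_insert_iff, Set.mem_singleton_iff]; try tauto
  -- (m,r,m)
  · obtain ⟨rfl, rfl⟩ := hxy; obtain ⟨-, rfl⟩ := hyz; exact absurd hxz (G₂.loopless.irrefl _)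
  -- (m,r,r)
  · obtain ⟨rfl, rfl⟩ := hxy; obtain ⟨-, rfl⟩ := hxz; exact absurd hyz (G₃.loopless.irrefl _)
  -- (r,l,l)
  · obtain ⟨rfl, rfl⟩ := hxy; obtain ⟨-, rfl⟩ := hxz; exact absurd hyz (G₁.loopless.irrefl _)
  -- (r,l,m)
  · obtain ⟨rfl, rfl⟩ := hxy; obtain ⟨-, rfl⟩ := hyz
    left; ext w; simp only [Set.mem_insert_iff, Set.mem_singleton_iff]; try tauto
  -- (r,l,r)
  · obtain ⟨rfl, rfl⟩ := hxy; obtain ⟨-, rfl⟩ := hyz; exact absurd hxz (G₃.loopless.irrefl _)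
  -- (r,m,l)
  · obtain ⟨rfl, rfl⟩ := hxy; obtain ⟨-, rfl⟩ := hyz
    left; ext w; simp only [Set.mem_insert_iff, Set.mem_singleton_iff]; try tauto
  -- (r,m,m)
  · obtain ⟨rfl, rfl⟩ := hxy; obtain ⟨-, rfl⟩ := hxz; exact absurd hyz (G₂.loopless.irrefl _)
  -- (r,m,r)
  · obtain ⟨rfl, rfl⟩ := hxy; obtain ⟨-, rfl⟩ := hyz; exact absurd hxz (G₃.loopless.irrefl _)
  -- (r,r,l)
  · obtain ⟨rfl, rfl⟩ := hyz; obtain ⟨rfl, -⟩ := hxz; exact absurd hxy (G₃.loopless.irrefl _)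
  -- (r,r,m)
  · obtain ⟨rfl, rfl⟩ := hyz; obtain ⟨rfl, -⟩ := hxz; exact absurd hxy (G₃.loopless.irrefl _)
  -- (r,r,r)
  · exact Or.inr (Or.inr (Or.inr ⟨a, b, c, rfl, rfl, rfl⟩))

end DeltaAux4
section DeltaAux5

open SimpleGraph

variable {V₁ V₂ V₃ : Type} {G₁ : SimpleGraph V₁} {G₂ : SimpleGraph V₂} {G₃ : SimpleGraph V₃}
  {v₁ : V₁} {v₂ : V₂} {v₃ : V₃}

lemma card_contra {m : ℕ} {W : Type} [Finite W] {K : SimpleGraph W} {S : Set W}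
    (h : InDelta m (K.induce S)) {A : Type} (hA : Nat.card A = 4 * 3 ^ m)
    (j : A → S) (hj : Function.Injective j) : False := by
  have h1 : Nat.card S = 2 * 3 ^ m := h.card
  have h2 : Nat.card A ≤ Nat.card S := Nat.card_le_card_of_injective j hj
  have h3 : 0 < 3 ^ m := pow_pos (by norm_num) m
  omega

lemma no_main_inl {m : ℕ} (h₁ : InDelta m G₁) (h₂ : InDelta m G₂) (h₃ : InDelta m G₃)
    (a b c : V₁)
    (hcomp : ∀ C : ((deltaComp G₁ G₂ G₃ v₁ v₂ v₃).deleteEdges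
        {s(Sum.inl a, Sum.inl b), s(Sum.inl b, Sum.inl c),
         s(Sum.inl a, Sum.inl c)}).ConnectedComponent,
      InDelta m (((deltaComp G₁ G₂ G₃ v₁ v₂ v₃).deleteEdges
        {s(Sum.inl a, Sum.inl b), s(Sum.inl b, Sum.inl c), s(Sum.inl a, Sum.inl c)}).induce
        {v | ((deltaComp G₁ G₂ G₃ v₁ v₂ v₃).deleteEdges
          {s(Sum.inl a, Sum.inl b), s(Sum.inl b, Sum.inl c),
           s(Sum.inl a, Sum.inl c)}).connectedComponentMk v = C})) : False := by
  haveI : Finite V₁ := h₁.finite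
  haveI : Finite V₂ := h₂.finite
  haveI : Finite V₃ := h₃.finite
  set K := (deltaComp G₁ G₂ G₃ v₁ v₂ v₃).deleteEdges
    {s(Sum.inl a, Sum.inl b), s(Sum.inl b, Sum.inl c), s(Sum.inl a, Sum.inl c)} with hKdef
  let hom₂ : G₂ →g K := ⟨fun x => .inr (.inl x), fun h => ⟨h, by simp [Sym2.eq_iff]⟩⟩
  let hom₃ : G₃ →g K := ⟨fun x => .inr (.inr x), fun h => ⟨h, by simp [Sym2.eq_iff]⟩⟩
  have hadj : K.Adj (.inr (.inr v₃)) (.inr (.inl v₂)) := ⟨⟨rfl, rfl⟩, by simp [Sym2.eq_iff]⟩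
  have hreach : ∀ x : V₂ ⊕ V₃, K.connectedComponentMk (.inr x)
      = K.connectedComponentMk (.inr (.inl v₂)) := by
    rintro (x | x)
    · exact ConnectedComponent.sound ((h₂.connected x v₂).map hom₂)
    · exact ConnectedComponent.sound (((h₃.connected x v₃).map hom₃).trans hadj.reachable)
  refine card_contra (hcomp (K.connectedComponentMk (.inr (.inl v₂))))
    (A := V₂ ⊕ V₃) (by rw [Nat.card_sum, h₂.card, h₃.card]; ring)
    (fun x => ⟨.inr x, hreach x⟩) (fun x y hxy => by simpa using congrArg Subtype.val hxy)

lemma no_main_inm {m : ℕ} (h₁ : InDelta m G₁) (h₂ : InDelta m G₂) (h₃ : InDelta m G₃)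
    (a b c : V₂)
    (hcomp : ∀ C : ((deltaComp G₁ G₂ G₃ v₁ v₂ v₃).deleteEdges
        {s(Sum.inr (Sum.inl a), Sum.inr (Sum.inl b)), s(Sum.inr (Sum.inl b), Sum.inr (Sum.inl c)),
         s(Sum.inr (Sum.inl a), Sum.inr (Sum.inl c))}).ConnectedComponent,
      InDelta m (((deltaComp G₁ G₂ G₃ v₁ v₂ v₃).deleteEdges
        {s(Sum.inr (Sum.inl a), Sum.inr (Sum.inl b)), s(Sum.inr (Sum.inl b), Sum.inr (Sum.inl c)),
         s(Sum.inr (Sum.inl a), Sum.inr (Sum.inl c))}).induce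
        {v | ((deltaComp G₁ G₂ G₃ v₁ v₂ v₃).deleteEdges
          {s(Sum.inr (Sum.inl a), Sum.inr (Sum.inl b)),
           s(Sum.inr (Sum.inl b), Sum.inr (Sum.inl c)),
           s(Sum.inr (Sum.inl a), Sum.inr (Sum.inl c))}).connectedComponentMk v = C})) :
    False := by
  haveI : Finite V₁ := h₁.finite
  haveI : Finite V₂ := h₂.finite
  haveI : Finite V₃ := h₃.finite
  set K := (deltaComp G₁ G₂ G₃ v₁ v₂ v₃).deleteEdges
    {s(Sum.inr (Sum.inl a), Sum.inr (Sum.inl b)), s(Sum.inr (Sum.inl b), Sum.inr (Sum.inl c)),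
     s(Sum.inr (Sum.inl a), Sum.inr (Sum.inl c))} with hKdef
  let hom₁ : G₁ →g K := ⟨Sum.inl, fun h => ⟨h, by simp [Sym2.eq_iff]⟩⟩
  let hom₃ : G₃ →g K := ⟨fun x => .inr (.inr x), fun h => ⟨h, by simp [Sym2.eq_iff]⟩⟩
  have hadj : K.Adj (.inr (.inr v₃)) (.inl v₁) := ⟨⟨rfl, rfl⟩, by simp [Sym2.eq_iff]⟩
  have hreach : ∀ x : V₁ ⊕ V₃,
      K.connectedComponentMk (Sum.elim Sum.inl (fun y => Sum.inr (Sum.inr y)) x)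
      = K.connectedComponentMk (.inl v₁) := by
    rintro (x | x)
    · exact ConnectedComponent.sound ((h₁.connected x v₁).map hom₁)
    · exact ConnectedComponent.sound (((h₃.connected x v₃).map hom₃).trans hadj.reachable)
  refine card_contra (hcomp (K.connectedComponentMk (.inl v₁)))
    (A := V₁ ⊕ V₃) (by rw [Nat.card_sum, h₁.card, h₃.card]; ring)
    (fun x => ⟨Sum.elim Sum.inl (fun y => Sum.inr (Sum.inr y)) x, hreach x⟩) ?_
  rintro (x | x) (y | y) hxy <;> simpa using congrArg Subtype.val hxy

lemma no_main_inr {m : ℕ} (h₁ : InDelta m G₁) (h₂ : InDelta m G₂) (h₃ : InDelta m G₃)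
    (a b c : V₃)
    (hcomp : ∀ C : ((deltaComp G₁ G₂ G₃ v₁ v₂ v₃).deleteEdges
        {s(Sum.inr (Sum.inr a), Sum.inr (Sum.inr b)), s(Sum.inr (Sum.inr b), Sum.inr (Sum.inr c)),
         s(Sum.inr (Sum.inr a), Sum.inr (Sum.inr c))}).ConnectedComponent,
      InDelta m (((deltaComp G₁ G₂ G₃ v₁ v₂ v₃).deleteEdges
        {s(Sum.inr (Sum.inr a), Sum.inr (Sum.inr b)), s(Sum.inr (Sum.inr b), Sum.inr (Sum.inr c)),
         s(Sum.inr (Sum.inr a), Sum.inr (Sum.inr c))}).induce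
        {v | ((deltaComp G₁ G₂ G₃ v₁ v₂ v₃).deleteEdges
          {s(Sum.inr (Sum.inr a), Sum.inr (Sum.inr b)),
           s(Sum.inr (Sum.inr b), Sum.inr (Sum.inr c)),
           s(Sum.inr (Sum.inr a), Sum.inr (Sum.inr c))}).connectedComponentMk v = C})) :
    False := by
  haveI : Finite V₁ := h₁.finite
  haveI : Finite V₂ := h₂.finite
  haveI : Finite V₃ := h₃.finite
  set K := (deltaComp G₁ G₂ G₃ v₁ v₂ v₃).deleteEdges
    {s(Sum.inr (Sum.inr a), Sum.inr (Sum.inr b)), s(Sum.inr (Sum.inr b), Sum.inr (Sum.inr c)),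
     s(Sum.inr (Sum.inr a), Sum.inr (Sum.inr c))} with hKdef
  let hom₁ : G₁ →g K := ⟨Sum.inl, fun h => ⟨h, by simp [Sym2.eq_iff]⟩⟩
  let hom₂ : G₂ →g K := ⟨fun x => .inr (.inl x), fun h => ⟨h, by simp [Sym2.eq_iff]⟩⟩
  have hadj : K.Adj (.inr (.inl v₂)) (.inl v₁) := ⟨⟨rfl, rfl⟩, by simp [Sym2.eq_iff]⟩
  have hreach : ∀ x : V₁ ⊕ V₂,
      K.connectedComponentMk (Sum.elim Sum.inl (fun y => Sum.inr (Sum.inl y)) x)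
      = K.connectedComponentMk (.inl v₁) := by
    rintro (x | x)
    · exact ConnectedComponent.sound ((h₁.connected x v₁).map hom₁)
    · exact ConnectedComponent.sound (((h₂.connected x v₂).map hom₂).trans hadj.reachable)
  refine card_contra (hcomp (K.connectedComponentMk (.inl v₁)))
    (A := V₁ ⊕ V₂) (by rw [Nat.card_sum, h₁.card, h₂.card]; ring)
    (fun x => ⟨Sum.elim Sum.inl (fun y => Sum.inr (Sum.inl y)) x, hreach x⟩) ?_
  rintro (x | x) (y | y) hxy <;> simpa using congrArg Subtype.val hxy

lemma deltaComp_unique {m : ℕ} (h₁ : InDelta m G₁) (h₂ : InDelta m G₂) (h₃ : InDelta m G₃)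
    {w₁ w₂ w₃ : V₁ ⊕ V₂ ⊕ V₃}
    (hw : IsMainTriangle (m + 1) (deltaComp G₁ G₂ G₃ v₁ v₂ v₃) w₁ w₂ w₃) :
    ({w₁, w₂, w₃} : Set (V₁ ⊕ V₂ ⊕ V₃))
      = {.inl v₁, .inr (.inl v₂), .inr (.inr v₃)} := by
  obtain ⟨hxy, hyz, hxz, hrest⟩ := hw
  have hcomp := hrest.2
  rcases triangle_classify hxy hyz hxz with h | ⟨a, b, c, rfl, rfl, rfl⟩ |
    ⟨a, b, c, rfl, rfl, rfl⟩ | ⟨a, b, c, rfl, rfl, rfl⟩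
  · exact h
  · exact absurd hcomp (fun h => no_main_inl h₁ h₂ h₃ a b c h)
  · exact absurd hcomp (fun h => no_main_inm h₁ h₂ h₃ a b c h)
  · exact absurd hcomp (fun h => no_main_inr h₁ h₂ h₃ a b c h)

end DeltaAux5
section DeltaAux6

open SimpleGraph

lemma isMainTriangle_of_iso {k : ℕ} {V W : Type} {G : SimpleGraph V} {H : SimpleGraph W}
    (f : G ≃g H) {w₁ w₂ w₃ : V}
    (h : IsMainTriangle k H (f w₁) (f w₂) (f w₃)) : IsMainTriangle k G w₁ w₂ w₃ := by
  obtain ⟨h12, h23, h13, hrest⟩ := h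
  have hcard := hrest.1
  have hcomp := hrest.2
  have hmem : ∀ u v : V,
      (s(f u, f v) ∈ ({s(f w₁, f w₂), s(f w₂, f w₃), s(f w₁, f w₃)} : Set (Sym2 W)))
        ↔ s(u, v) ∈ ({s(w₁, w₂), s(w₂, w₃), s(w₁, w₃)} : Set (Sym2 V)) := by
    intro u v
    simp only [Set.mem_insert_iff, Set.mem_singleton_iff, Sym2.eq_iff,
      EmbeddingLike.apply_eq_iff_eq]
  let fD : G.deleteEdges {s(w₁, w₂), s(w₂, w₃), s(w₁, w₃)} ≃g
      H.deleteEdges {s(f w₁, f w₂), s(f w₂, f w₃), s(f w₁, f w₃)} :=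
    { f.toEquiv with
      map_rel_iff' := by
        intro u v
        show (H.deleteEdges _).Adj (f u) (f v) ↔ _
        rw [SimpleGraph.deleteEdges_adj, SimpleGraph.deleteEdges_adj, f.map_adj_iff, hmem] }
  refine ⟨f.map_adj_iff.mp h12, f.map_adj_iff.mp h23, f.map_adj_iff.mp h13, ?_, ?_⟩
  · rw [Nat.card_congr fD.connectedComponentEquiv]
    exact hcard
  · intro C
    obtain ⟨u, rfl⟩ := Quot.exists_rep C
    have hu : ∀ v : V,
        (G.deleteEdges {s(w₁, w₂), s(w₂, w₃), s(w₁, w₃)}).connectedComponentMk v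
            = Quot.mk _ u
          ↔ (H.deleteEdges {s(f w₁, f w₂), s(f w₂, f w₃),
              s(f w₁, f w₃)}).connectedComponentMk (f v)
            = (H.deleteEdges {s(f w₁, f w₂), s(f w₂, f w₃),
              s(f w₁, f w₃)}).connectedComponentMk (f u) := by
      intro v
      show (G.deleteEdges _).connectedComponentMk v
          = (G.deleteEdges _).connectedComponentMk u ↔ _
      rw [ConnectedComponent.eq, ConnectedComponent.eq]
      exact (Iso.reachable_iff (φ := fD)).symm
    refine (hcomp ((H.deleteEdges {s(f w₁, f w₂), s(f w₂, f w₃),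
      s(f w₁, f w₃)}).connectedComponentMk (f u))).of_iso ?_
    refine { toEquiv := f.toEquiv.subtypeEquiv hu, map_rel_iff' := ?_ }
    intro s t
    show (SimpleGraph.induce _ _).Adj ⟨f s.1, _⟩ ⟨f t.1, _⟩ ↔ _
    simp only [comap_adj, Function.Embedding.coe_subtype]
    exact fD.map_adj_iff

end DeltaAux6

theorem delta_main_triangle_unique {V : Type} [Fintype V] [DecidableEq V]
    (k : ℕ) (hk : 1 ≤ k) (G : SimpleGraph V) (hG : InDelta k G) :
    ∃ v₁ v₂ v₃ : V, IsMainTriangle k G v₁ v₂ v₃ ∧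
      ∀ w₁ w₂ w₃ : V, IsMainTriangle k G w₁ w₂ w₃ →
        ({w₁, w₂, w₃} : Set V) = ({v₁, v₂, v₃} : Set V) := by
  obtain ⟨m, rfl⟩ : ∃ m, k = m + 1 := ⟨k - 1, by omega⟩
  cases hG with
  | comp G u₁ u₂ u₃ h₁ h₂ h₃ e =>
    obtain ⟨f⟩ := e
    refine ⟨f.symm (.inl u₁), f.symm (.inr (.inl u₂)), f.symm (.inr (.inr u₃)), ?_, ?_⟩
    · apply isMainTriangle_of_iso f
      rw [RelIso.apply_symm_apply, RelIso.apply_symm_apply, RelIso.apply_symm_apply]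
      exact deltaComp_main h₁ h₂ h₃
    · intro w₁ w₂ w₃ hw
      have hw' : IsMainTriangle (m + 1) _ (f w₁) (f w₂) (f w₃) :=
        isMainTriangle_of_iso f.symm (by
          rw [RelIso.symm_apply_apply, RelIso.symm_apply_apply, RelIso.symm_apply_apply]
          exact hw)
      have hset := deltaComp_unique h₁ h₂ h₃ hw'
      have himg := congrArg (fun S => (⇑f.symm) '' S) hset
      simpa [Set.image_insert_eq, Set.image_singleton] using himg
end
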